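/- Let X be an n×k real matrix of rank k, Ω an n×n positive definite matrix, K a k×k positive semidefinite matrix, and F = K[(X^T Ω^{-1} X)^{-1} + K]^{-1} (X^T Ω^{-1} X)^{-1} X^T Ω^{-1}. Then the column space of F Ω is contained in the column space of F X. (Linear completeness of the Bayes linear estimator.) -/

import Mathlib

open Matrix

theorem stmt_4 {n k : ℕ} (hnk : k < n)
    (X : Matrix (Fin n) (Fin k) ℝ) (hX : X.rank = k)
    (Ω : Matrix (Fin n) (Fin n) ℝ) (hΩ : Ω.PosDef)
    (K : Matrix (Fin k) (Fin k) ℝ) (hK : K.PosSemidef)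
    (F : Matrix (Fin k) (Fin n) ℝ)
    (hF : F = K * ((Xᵀ * Ω⁻¹ * X)⁻¹ + K)⁻¹ * (Xᵀ * Ω⁻¹ * X)⁻¹ * Xᵀ * Ω⁻¹) :
    ∃ G : Matrix (Fin k) (Fin n) ℝ, F * Ω = F * X * G := by
  have hinj : Function.Injective X.mulVecLin := by
    rw [← LinearMap.ker_eq_bot, ← Submodule.finrank_eq_zero (R := ℝ)]
    have h1 := LinearMap.finrank_range_add_finrank_ker X.mulVecLin
    rw [show Module.finrank ℝ (LinearMap.range X.mulVecLin) = k from hX] at h1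
    simpa using h1
  have hΩi : (Ω⁻¹).PosDef := hΩ.inv
  have hsym : Ω⁻¹ᵀ = Ω⁻¹ := by simpa using hΩi.isHermitian.eq
  have hA : (Xᵀ * Ω⁻¹ * X).PosDef := by
    refine Matrix.PosDef.of_dotProduct_mulVec_pos ?_ ?_
    · show (Xᵀ * Ω⁻¹ * X)ᴴ = _
      simp [Matrix.conjTranspose_mul, Matrix.mul_assoc, hsym,
        Matrix.conjTranspose_eq_transpose_of_trivial]
    · intro x hx
      have hXx : X *ᵥ x ≠ 0 := fun h => hx (hinj (by simpa using h))
      have h2 := hΩi.dotProduct_mulVec_pos hXx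
      have he : x ⬝ᵥ (Xᵀ * Ω⁻¹ * X) *ᵥ x = (X *ᵥ x) ⬝ᵥ Ω⁻¹ *ᵥ (X *ᵥ x) := by
        rw [← Matrix.mulVec_mulVec, ← Matrix.mulVec_mulVec, Matrix.dotProduct_mulVec,
          Matrix.vecMul_transpose]
      rw [show (star x : Fin k → ℝ) = x from rfl, he]
      simpa using h2
  have hAu : IsUnit (Xᵀ * Ω⁻¹ * X).det := isUnit_iff_ne_zero.mpr hA.det_pos.ne'
  have hAi : (Xᵀ * Ω⁻¹ * X)⁻¹ * (Xᵀ * Ω⁻¹ * X) = 1 := Matrix.nonsing_inv_mul _ hAu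
  have hΩc : Ω⁻¹ * Ω = 1 :=
    Matrix.nonsing_inv_mul _ (isUnit_iff_ne_zero.mpr hΩ.det_pos.ne')
  refine ⟨(Xᵀ * Ω⁻¹ * X)⁻¹ * Xᵀ, ?_⟩
  subst hF
  set M := ((Xᵀ * Ω⁻¹ * X)⁻¹ + K)⁻¹ with hM
  have key : K * M * (Xᵀ * Ω⁻¹ * X)⁻¹ * Xᵀ * Ω⁻¹ * X * ((Xᵀ * Ω⁻¹ * X)⁻¹ * Xᵀ)
      = K * M * (Xᵀ * Ω⁻¹ * X)⁻¹ * Xᵀ := by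
    have h1 : K * M * (Xᵀ * Ω⁻¹ * X)⁻¹ * Xᵀ * Ω⁻¹ * X
        = K * M * ((Xᵀ * Ω⁻¹ * X)⁻¹ * (Xᵀ * Ω⁻¹ * X)) := by
      simp only [Matrix.mul_assoc]
    rw [h1, hAi, Matrix.mul_one]
    simp only [Matrix.mul_assoc]
  rw [Matrix.mul_assoc _ Ω⁻¹ Ω, hΩc, Matrix.mul_one]
  exact key.symm
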